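/- Let d ≥ 2 and ε ∈ (0, 1/2]. Then the inverse minimal dispersion on the torus satisfies Ñ(ε,d) ≤ 24e · (2d ln(2d) + ln(e/ε)) / ε. -/

import Mathlib

open Finset

/-- The `i`-th factor of a periodic axis-parallel box on the torus `[0,1]^d`,
determined by endpoints `a, b ∈ [0,1]`. -/
noncomputable def perInterval (a b : ℝ) : Set ℝ :=
  if a < b then Set.Ioo a b else Set.Icc 0 1 \ Set.Icc b a

/-- Volume of a periodic box. -/
noncomputable def perVol (d : ℕ) (a b : Fin d → ℝ) : ℝ :=
  ∏ i, (if a i < b i then b i - a i else 1 - (a i - b i))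

/-- Periodic dispersion of a finite point set `P ⊆ [0,1]^d`. -/
noncomputable def perDisp (d : ℕ) (P : Finset (Fin d → ℝ)) : ℝ :=
  sSup {v : ℝ | ∃ a b : Fin d → ℝ,
    (∀ i, a i ∈ Set.Icc (0:ℝ) 1 ∧ b i ∈ Set.Icc (0:ℝ) 1) ∧
    v = perVol d a b ∧
    ∀ x ∈ P, x ∉ Set.univ.pi fun i => perInterval (a i) (b i)}

/-- Minimal periodic dispersion over `n`-point subsets of the cube. -/
noncomputable def perDispStar (d n : ℕ) : ℝ :=
  sInf {v : ℝ | ∃ P : Finset (Fin d → ℝ),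
    (P : Set (Fin d → ℝ)) ⊆ (Set.univ.pi fun _ => Set.Icc (0:ℝ) 1) ∧
    P.card = n ∧ v = perDisp d P}

/-- Inverse of the minimal periodic dispersion. -/
noncomputable def perNinv (ε : ℝ) (d : ℕ) : ℕ :=
  sInf {n : ℕ | perDispStar d n ≤ ε}

namespace S18
open MeasureTheory Set
noncomputable def len (a b : ℝ) : ℝ := if a < b then b - a else 1 - (a - b)

lemma len_mem {a b : ℝ} (ha : a ∈ Set.Icc (0:ℝ) 1) (hb : b ∈ Set.Icc (0:ℝ) 1) :
    len a b ∈ Set.Icc (0:ℝ) 1 := by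
  unfold len
  split_ifs with h
  · constructor <;> [linarith; linarith [ha.1, hb.2]]
  · push_neg at h
    constructor <;> [linarith [ha.2, hb.1]; linarith [h]]

lemma perInterval_subset_Icc {a b : ℝ} (ha : a ∈ Set.Icc (0:ℝ) 1) (hb : b ∈ Set.Icc (0:ℝ) 1) :
    perInterval a b ⊆ Set.Icc (0:ℝ) 1 := by
  unfold perInterval
  split_ifs with h
  · exact fun x hx => ⟨le_trans ha.1 hx.1.le, le_trans hx.2.le hb.2⟩
  · exact fun x hx => hx.1

lemma measurableSet_perInterval (a b : ℝ) : MeasurableSet (perInterval a b) := by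
  unfold perInterval
  split_ifs
  · exact measurableSet_Ioo
  · exact measurableSet_Icc.diff measurableSet_Icc

lemma volume_perInterval {a b : ℝ} (ha : a ∈ Set.Icc (0:ℝ) 1) (hb : b ∈ Set.Icc (0:ℝ) 1) :
    volume (perInterval a b) = ENNReal.ofReal (len a b) := by
  unfold perInterval len
  split_ifs with h
  · exact Real.volume_Ioo
  · push_neg at h
    have hsub : Set.Icc b a ⊆ Set.Icc (0:ℝ) 1 := Set.Icc_subset_Icc hb.1 ha.2
    rw [measure_diff hsub measurableSet_Icc.nullMeasurableSet (by simp [Real.volume_Icc]),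
      Real.volume_Icc, Real.volume_Icc, ← ENNReal.ofReal_sub _ (by linarith [hb.1] : (0:ℝ) ≤ a - b)]
    norm_num

noncomputable def th (d : ℕ) : ℝ := 1 / (4 * d)
noncomputable def lam (d k : ℕ) : ℝ := (1 - th d) ^ k
noncomputable def sp (d k : ℕ) : ℝ := th d * lam d k
noncomputable def Mn (d k : ℕ) : ℕ := ⌈1 / sp d k⌉₊ + 1
noncomputable def Kn (d : ℕ) (ε : ℝ) : ℕ := ⌊(4 * d : ℝ) * Real.log (2 / ε)⌋₊
noncomputable def aA (d k m : ℕ) : ℝ := m * sp d k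
noncomputable def aB (d k m : ℕ) : ℝ :=
  if aA d k m + lam d k ≤ 1 then aA d k m + lam d k else aA d k m + lam d k - 1
noncomputable def ArcSet (d k m : ℕ) : Set ℝ := perInterval (aA d k m) (aB d k m)

section Basic
variable {d : ℕ} (hd : 2 ≤ d)
include hd

lemma th_pos : 0 < th d := one_div_pos.2 (by positivity)

lemma th_le : th d ≤ 1/8 := by
  unfold th
  have h8 : (8:ℝ) ≤ 4 * d := by
    have : (2:ℝ) ≤ d := by exact_mod_cast hd
    linarith
  rw [div_le_div_iff₀ (by linarith) (by norm_num)]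
  linarith

lemma one_sub_th_pos : 0 < 1 - th d := by have := th_le hd; linarith
lemma one_sub_th_lt_one : 1 - th d < 1 := by have := th_pos hd; linarith

lemma lam_pos (k : ℕ) : 0 < lam d k := pow_pos (one_sub_th_pos hd) k
lemma lam_le_one (k : ℕ) : lam d k ≤ 1 :=
  pow_le_one₀ (le_of_lt (one_sub_th_pos hd)) (by have := th_pos hd; linarith)
lemma sp_pos (k : ℕ) : 0 < sp d k := mul_pos (th_pos hd) (lam_pos hd k)
lemma lam_antitone {k k' : ℕ} (h : k ≤ k') : lam d k' ≤ lam d k :=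
  pow_le_pow_of_le_one (le_of_lt (one_sub_th_pos hd))
    (le_of_lt (one_sub_th_lt_one hd)) h
lemma Mn_mono {k k' : ℕ} (h : k ≤ k') : Mn d k ≤ Mn d k' := by
  unfold Mn
  have h1 : 1 / sp d k ≤ 1 / sp d k' := by
    apply one_div_le_one_div_of_le (sp_pos hd k')
    exact mul_le_mul_of_nonneg_left (lam_antitone hd h) (le_of_lt (th_pos hd))
  exact Nat.add_le_add_right (Nat.ceil_le_ceil h1) 1

lemma aA_nonneg (k m : ℕ) : 0 ≤ aA d k m :=
  mul_nonneg (Nat.cast_nonneg m) (le_of_lt (sp_pos hd k))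

lemma aB_mem {k m : ℕ} (h1 : aA d k m ≤ 1) :
    aB d k m ∈ Set.Icc (0:ℝ) 1 := by
  unfold aB
  have h0 := aA_nonneg hd k m
  have hl := lam_pos hd k
  have hl1 := lam_le_one hd k
  split_ifs with h
  · constructor <;> linarith
  · push_neg at h
    constructor <;> linarith

lemma len_arc (k m : ℕ) : len (aA d k m) (aB d k m) = lam d k := by
  unfold len aB
  have h0 := aA_nonneg hd k m
  have hl := lam_pos hd k
  have hl1 := lam_le_one hd k
  split_ifs with h h2 h3
  · ring
  · exfalso; apply h2; linarith
  · exfalso; linarith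
  · ring

/-- one dimensional covering lemma -/
lemma cover1 {a b : ℝ} (ha : a ∈ Set.Icc (0:ℝ) 1) (hb : b ∈ Set.Icc (0:ℝ) 1)
    (k : ℕ) (hlen : (1 + th d) * lam d k ≤ len a b) :
    ∃ m : ℕ, m < Mn d k ∧ aA d k m ≤ 1 ∧ ArcSet d k m ⊆ perInterval a b := by
  have hθ := th_pos hd
  have hL := lam_pos hd k
  have hs := sp_pos hd k
  set s := sp d k with hs_def
  set L := lam d k with hL_def
  have hsL : s = th d * L := rfl
  have hlen1 : len a b ≤ 1 := (len_mem ha hb).2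
  have hL1 : (1 + th d) * L ≤ 1 := le_trans hlen hlen1
  have hLlt1 : L < 1 := by nlinarith
  have hceil : ∀ m : ℕ, aA d k m = (m : ℝ) * s := fun m => rfl
  have hcm : a ≤ (⌈a / s⌉₊ : ℝ) * s := by
    have h1 := Nat.le_ceil (a / s)
    calc a = (a / s) * s := by field_simp
    _ ≤ (⌈a / s⌉₊ : ℝ) * s := mul_le_mul_of_nonneg_right h1 (le_of_lt hs)
  have hcm2 : (⌈a / s⌉₊ : ℝ) * s < a + s := by
    have h1 : (⌈a / s⌉₊ : ℝ) < a / s + 1 :=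
      Nat.ceil_lt_add_one (div_nonneg ha.1 (le_of_lt hs))
    calc (⌈a / s⌉₊ : ℝ) * s < (a / s + 1) * s := mul_lt_mul_of_pos_right h1 hs
    _ = a + s := by field_simp
  have hmM : ⌈a / s⌉₊ < Mn d k := by
    have h1 : a / s ≤ 1 / s := by
      rw [div_le_div_iff_of_pos_right hs]; exact ha.2
    exact Nat.lt_succ_of_le (Nat.ceil_le_ceil h1)
  by_cases hab : a < b
  · -- non-wrap case
    have hlenab : len a b = b - a := if_pos hab
    rw [hlenab] at hlen
    set m := ⌈a / s⌉₊ with hm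
    have hp1 : (m:ℝ) * s + L ≤ b := by nlinarith
    refine ⟨m, hmM, ?_, ?_⟩
    · rw [hceil]; nlinarith [hb.2]
    · have haB : aB d k m = (m:ℝ) * s + L := by
        unfold aB
        rw [if_pos (show aA d k m + lam d k ≤ 1 by
          rw [hceil]; exact le_trans hp1 hb.2)]
        rfl
      unfold ArcSet perInterval
      rw [hceil, haB, if_pos hab, if_pos (by nlinarith : (m:ℝ) * s < (m:ℝ)*s + L)]
      exact Set.Ioo_subset_Ioo hcm hp1
  · -- wrap case
    push_neg at hab
    have hlenab : len a b = 1 - (a - b) := if_neg (not_lt.2 hab)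
    rw [hlenab] at hlen
    by_cases hc : (⌈a / s⌉₊ : ℝ) * s ≤ 1
    · refine ⟨⌈a / s⌉₊, hmM, by rw [hceil]; exact hc, ?_⟩
      set m := ⌈a / s⌉₊ with hm
      have hq : (m:ℝ) * s + L - 1 < b := by nlinarith
      by_cases hw : (m:ℝ) * s + L ≤ 1
      · have haB : aB d k m = (m:ℝ) * s + L := by
          unfold aB
          rw [if_pos (show aA d k m + lam d k ≤ 1 by rw [hceil]; exact hw)]
          rfl
        unfold ArcSet perInterval
        rw [hceil, haB, if_pos (by nlinarith : (m:ℝ) * s < (m:ℝ)*s + L),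
          if_neg (not_lt.2 hab)]
        intro x hx
        rcases hx with ⟨hx1, hx2⟩
        have h0m : (0:ℝ) ≤ (m:ℝ) * s := mul_nonneg (Nat.cast_nonneg m) (le_of_lt hs)
        refine ⟨⟨by linarith, by linarith⟩, ?_⟩
        intro hmem
        have := hmem.2
        linarith
      · push_neg at hw
        have haB : aB d k m = (m:ℝ) * s + L - 1 := by
          unfold aB
          rw [if_neg (show ¬ (aA d k m + lam d k ≤ 1) by rw [hceil]; exact not_le.2 hw)]
          rfl
        unfold ArcSet perInterval
        rw [hceil, haB, if_neg (by push_neg; nlinarith : ¬ ((m:ℝ) * s < (m:ℝ)*s + L - 1)),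
          if_neg (not_lt.2 hab)]
        intro x hx
        rcases hx with ⟨hx1, hx2⟩
        refine ⟨hx1, ?_⟩
        intro hmem
        exact hx2 ⟨by linarith [hmem.1], le_trans hmem.2 hcm⟩
    · -- start would be past 1 : take m = 0
      push_neg at hc
      have has : 1 < a + s := lt_trans hc hcm2
      refine ⟨0, by unfold Mn; omega, ?_, ?_⟩
      · rw [hceil]; norm_num
      · have haA : aA d k 0 = 0 := by rw [hceil]; norm_num
        have haB : aB d k 0 = L := by
          unfold aB
          rw [if_pos (show aA d k 0 + lam d k ≤ 1 by
            rw [haA]; simpa using lam_le_one hd k)]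
          rw [haA]; ring
        have hbL : L < b := by nlinarith
        unfold ArcSet perInterval
        rw [haA, haB, if_pos hL, if_neg (not_lt.2 hab)]
        intro x hx
        rcases hx with ⟨hx1, hx2⟩
        refine ⟨⟨le_of_lt hx1, by linarith⟩, ?_⟩
        intro hmem
        have := hmem.1
        linarith

end Basic
end S18


namespace S18
open MeasureTheory Set

lemma perVol_eq (d : ℕ) (a b : Fin d → ℝ) : perVol d a b = ∏ i, len (a i) (b i) := rfl

noncomputable def BoxSet (d : ℕ) (σ : Fin d → ℕ × ℕ) : Set (Fin d → ℝ) :=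
  Set.univ.pi fun i => ArcSet d (σ i).1 (σ i).2

noncomputable def Vfin (d : ℕ) (ε : ℝ) : Finset (Fin d → ℕ × ℕ) :=
  @Finset.filter _
    (fun σ => (∀ i, (σ i).2 < Mn d (σ i).1 ∧ aA d (σ i).1 (σ i).2 ≤ 1) ∧
      ε / 2 ≤ ∏ i, lam d (σ i).1) (Classical.decPred _)
    (Fintype.piFinset fun _ => Finset.range (Kn d ε + 1) ×ˢ Finset.range (Mn d (Kn d ε)))

lemma mem_Vfin {d : ℕ} {ε : ℝ} {σ : Fin d → ℕ × ℕ} :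
    σ ∈ Vfin d ε ↔
      σ ∈ (Fintype.piFinset fun _ : Fin d =>
          Finset.range (Kn d ε + 1) ×ˢ Finset.range (Mn d (Kn d ε))) ∧
      ((∀ i, (σ i).2 < Mn d (σ i).1 ∧ aA d (σ i).1 (σ i).2 ≤ 1) ∧
        ε / 2 ≤ ∏ i, lam d (σ i).1) :=
  @Finset.mem_filter _ _ (Classical.decPred _) _ _

section Net
variable {d : ℕ} (hd : 2 ≤ d) {ε : ℝ} (hε0 : 0 < ε) (hε2 : ε ≤ 1/2)
include hd hε0

/-- level is at most `Kn` whenever `lam d k ≥ ε/2`. -/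
lemma le_Kn {k : ℕ} (hk : ε / 2 ≤ lam d k) : k ≤ Kn d ε := by
  have hθ := th_pos hd
  have h1θ := one_sub_th_pos hd
  -- log (1 - θ) ≤ -θ
  have hlog : Real.log (1 - th d) ≤ - th d := by
    have h := Real.add_one_le_exp (- th d)
    have := Real.log_le_log h1θ (by linarith : 1 - th d ≤ Real.exp (- th d))
    rwa [Real.log_exp] at this
  have hlam : Real.log (lam d k) = k * Real.log (1 - th d) := by
    unfold lam; rw [Real.log_pow]
  have hle : Real.log (ε/2) ≤ Real.log (lam d k) :=
    Real.log_le_log (by positivity) hk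
  have hlog2 : Real.log (ε/2) = - Real.log (2/ε) := by
    rw [← Real.log_inv]
    congr 1
    field_simp
  have hkθ : (k:ℝ) * th d ≤ Real.log (2/ε) := by
    have : -Real.log (2/ε) ≤ (k:ℝ) * Real.log (1 - th d) := by
      rw [← hlog2, ← hlam]; exact hle
    nlinarith [mul_le_mul_of_nonneg_left hlog (Nat.cast_nonneg k)]
  have hk4d : (k:ℝ) ≤ (4*d:ℝ) * Real.log (2/ε) := by
    have h4d : (0:ℝ) < 4*(d:ℝ) := by positivity
    have hth : th d = 1/(4*(d:ℝ)) := rfl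
    rw [hth] at hkθ
    have h2 := mul_le_mul_of_nonneg_right hkθ (le_of_lt h4d)
    have h3 : (k:ℝ) * (1/(4*(d:ℝ))) * (4*(d:ℝ)) = k := by field_simp
    nlinarith [h2, h3]
  exact Nat.le_floor hk4d

/-- multidimensional net lemma -/
lemma net (a b : Fin d → ℝ)
    (hab : ∀ i, a i ∈ Set.Icc (0:ℝ) 1 ∧ b i ∈ Set.Icc (0:ℝ) 1)
    (hvol : ε < perVol d a b) :
    ∃ σ ∈ Vfin d ε, BoxSet d σ ⊆ Set.univ.pi fun i => perInterval (a i) (b i) := by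
  have hθ := th_pos hd
  have hθ8 := th_le hd
  set li : Fin d → ℝ := fun i => len (a i) (b i) with hli
  have h01 : ∀ i, li i ∈ Set.Icc (0:ℝ) 1 := fun i => len_mem (hab i).1 (hab i).2
  have hprod : ε < ∏ i, li i := by rwa [perVol_eq] at hvol
  have hlib : ∀ i, ε < li i := by
    intro i
    have h1 : ∏ j, li j ≤ li i := by
      rw [Finset.prod_eq_mul_prod_sdiff_singleton_of_mem (Finset.mem_univ i)]
      have h2 : ∏ j ∈ Finset.univ \ {i}, li j ≤ 1 :=
        Finset.prod_le_one (fun j _ => (h01 j).1) (fun j _ => (h01 j).2)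
      nlinarith [(h01 i).1, Finset.prod_nonneg (fun j (_ : j ∈ Finset.univ \ {i}) => (h01 j).1)]
    linarith
  have hex : ∀ i, ∃ k, (1 + th d) * lam d k ≤ li i := by
    intro i
    obtain ⟨k, hk⟩ := exists_pow_lt_of_lt_one
      (show 0 < li i / (1 + th d) from div_pos (lt_trans hε0 (hlib i)) (by linarith))
      (one_sub_th_lt_one hd)
    exact ⟨k, by
      have : lam d k < li i / (1 + th d) := hk
      rw [lt_div_iff₀ (by linarith : (0:ℝ) < 1 + th d)] at this
      linarith [this]⟩
  classical
  set k : Fin d → ℕ := fun i => Nat.find (hex i) with hk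
  have hkprop : ∀ i, (1 + th d) * lam d (k i) ≤ li i := fun i => Nat.find_spec (hex i)
  have hmin : ∀ i, (1 - 2 * th d) * li i ≤ lam d (k i) := by
    intro i
    rcases Nat.eq_zero_or_pos (k i) with h0 | hpos
    · rw [h0]
      have : lam d 0 = 1 := by simp [lam]
      rw [this]
      nlinarith [(h01 i).1, (h01 i).2]
    · obtain ⟨j, hj⟩ := Nat.exists_eq_succ_of_ne_zero (Nat.pos_iff_ne_zero.1 hpos)
      have hne : ¬ ((1 + th d) * lam d j ≤ li i) := by
        have := Nat.find_min (hex i) (by omega : j < k i)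
        exact this
      push_neg at hne
      have hlamsucc : lam d (k i) = (1 - th d) * lam d j := by
        rw [hj]; unfold lam; rw [pow_succ]; ring
      have hlj := lam_pos hd j
      rw [hlamsucc]
      have hA : (1 - 2*th d) * li i ≤ (1 - 2*th d) * ((1 + th d) * lam d j) :=
        mul_le_mul_of_nonneg_left (le_of_lt hne) (by linarith)
      nlinarith [hA, mul_nonneg (mul_nonneg (le_of_lt hθ) (le_of_lt hθ)) (le_of_lt hlj)]
  have hkl : ∀ i, 0 ≤ (1 - 2*th d) * li i := by
    intro i
    apply mul_nonneg _ (h01 i).1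
    linarith
  have hprod2 : ε / 2 ≤ ∏ i, lam d (k i) := by
    have h1 : ∏ i, ((1 - 2*th d) * li i) ≤ ∏ i, lam d (k i) :=
      Finset.prod_le_prod (fun i _ => hkl i) (fun i _ => hmin i)
    have h2 : ∏ i, ((1 - 2*th d) * li i) = (1 - 2*th d)^d * ∏ i, li i := by
      rw [Finset.prod_mul_distrib, Finset.prod_const, Finset.card_univ, Fintype.card_fin]
    have h3 : (1/2 : ℝ) ≤ (1 - 2*th d)^d := by
      have hb := one_add_mul_le_pow (show (-2:ℝ) ≤ -(2 * th d) by linarith) d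
      have hd0 : (d:ℝ) ≠ 0 := Nat.cast_ne_zero.2 (by omega)
      have h2th : 1 + (d:ℝ) * (-(2 * th d)) = 1/2 := by
        unfold th; field_simp; ring
      calc (1/2:ℝ) = 1 + (d:ℝ) * (-(2 * th d)) := h2th.symm
      _ ≤ (1 + -(2 * th d))^d := hb
      _ = (1 - 2*th d)^d := by ring_nf
    have h4 : ε/2 ≤ (1 - 2*th d)^d * ∏ i, li i := by
      have hp : (0:ℝ) ≤ ∏ i, li i := Finset.prod_nonneg (fun i _ => (h01 i).1)
      nlinarith
    calc ε/2 ≤ (1 - 2*th d)^d * ∏ i, li i := h4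
    _ = ∏ i, ((1 - 2*th d) * li i) := h2.symm
    _ ≤ ∏ i, lam d (k i) := h1
  have hkK : ∀ i, k i ≤ Kn d ε := by
    intro i
    apply le_Kn hd hε0
    have h1 : ∏ j, lam d (k j) ≤ lam d (k i) := by
      rw [Finset.prod_eq_mul_prod_sdiff_singleton_of_mem (Finset.mem_univ i)]
      have h2 : ∏ j ∈ Finset.univ \ {i}, lam d (k j) ≤ 1 :=
        Finset.prod_le_one (fun j _ => le_of_lt (lam_pos hd _)) (fun j _ => lam_le_one hd _)
      nlinarith [le_of_lt (lam_pos hd (k i)),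
        Finset.prod_nonneg (fun j (_ : j ∈ Finset.univ \ {i}) => le_of_lt (lam_pos hd (k j)))]
    linarith
  -- apply cover1 coordinatewise
  have hcov : ∀ i, ∃ m : ℕ, m < Mn d (k i) ∧ aA d (k i) m ≤ 1 ∧
      ArcSet d (k i) m ⊆ perInterval (a i) (b i) :=
    fun i => cover1 hd (hab i).1 (hab i).2 (k i) (hkprop i)
  choose m hm1 hm2 hm3 using hcov
  refine ⟨fun i => (k i, m i), ?_, ?_⟩
  · rw [mem_Vfin]
    refine ⟨?_, ?_, hprod2⟩
    · rw [Fintype.mem_piFinset]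
      intro i
      rw [Finset.mem_product]
      constructor
      · simp only [Finset.mem_range]
        exact Nat.lt_succ_of_le (hkK i)
      · simp only [Finset.mem_range]
        exact lt_of_lt_of_le (hm1 i) (Mn_mono hd (hkK i))
    · exact fun i => ⟨hm1 i, hm2 i⟩
  · unfold BoxSet
    exact Set.pi_mono (fun i _ => hm3 i)

end Net
end S18

namespace S18
open MeasureTheory Set

section Count
variable {d : ℕ} (hd : 2 ≤ d) {ε : ℝ} (hε0 : 0 < ε)
include hd hε0

lemma Mn_real_bound (k : ℕ) : (Mn d k : ℝ) ≤ 8 * d * (lam d k)⁻¹ := by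
  have hθ := th_pos hd
  have hL := lam_pos hd k
  have hs := sp_pos hd k
  have hL1 := lam_le_one hd k
  have h1 : (Mn d k : ℝ) = (⌈1 / sp d k⌉₊ : ℝ) + 1 := by
    unfold Mn; push_cast; ring
  have h2 : (⌈1 / sp d k⌉₊ : ℝ) < 1 / sp d k + 1 :=
    Nat.ceil_lt_add_one (by positivity)
  have hsp : 1 / sp d k = 4 * d * (lam d k)⁻¹ := by
    unfold sp th
    have hd0 : (d:ℝ) ≠ 0 := Nat.cast_ne_zero.2 (by omega)
    field_simp
  have h8 : (2:ℝ) ≤ 4 * d * (lam d k)⁻¹ := by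
    have hinv : (1:ℝ) ≤ (lam d k)⁻¹ := by
      rw [le_inv_comm₀ one_pos hL]; simpa using hL1
    have hd2 : (2:ℝ) ≤ (d:ℝ) := by exact_mod_cast hd
    nlinarith
  rw [h1, hsp]
  rw [hsp] at h2
  linarith

lemma card_Vfin : ((Vfin d ε).card : ℝ) ≤
    ((Kn d ε + 1 : ℕ) : ℝ)^d * (8*d)^d * (2/ε) := by
  classical
  set K := Kn d ε
  set t : Finset (Fin d → ℕ) := Fintype.piFinset fun _ : Fin d => Finset.range (K + 1) with ht
  have hmap : ∀ σ ∈ Vfin d ε, (fun i => (σ i).1) ∈ t := by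
    intro σ hσ
    rw [mem_Vfin] at hσ
    rw [Fintype.mem_piFinset]
    intro i
    have := (Fintype.mem_piFinset.1 hσ.1) i
    rw [Finset.mem_product] at this
    exact this.1
  have hcard := Finset.card_eq_sum_card_fiberwise hmap
  have hfiber : ∀ κ ∈ t,
      (((Vfin d ε).filter (fun σ => (fun i => (σ i).1) = κ)).card : ℝ) ≤ (8*d)^d * (2/ε) := by
    intro κ _
    set fib := (Vfin d ε).filter (fun σ => (fun i => (σ i).1) = κ) with hfib
    rcases Finset.eq_empty_or_nonempty fib with he | hne
    · rw [he]
      simp only [Finset.card_empty, Nat.cast_zero]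
      positivity
    · obtain ⟨σ₀, hσ₀⟩ := hne
      rw [hfib, Finset.mem_filter] at hσ₀
      obtain ⟨hσ₀V, hσ₀κ⟩ := hσ₀
      rw [mem_Vfin] at hσ₀V
      have hκprod : ε/2 ≤ ∏ i, lam d (κ i) := by
        have := hσ₀V.2.2
        convert this using 2 with i
        rw [← hσ₀κ]
      -- fiber is inside a product finset
      have hsub : fib ⊆ Fintype.piFinset fun i => ({κ i} : Finset ℕ) ×ˢ Finset.range (Mn d (κ i)) := by
        intro σ hσ
        rw [hfib, Finset.mem_filter] at hσ
        obtain ⟨hσV, hσκ⟩ := hσ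
        rw [mem_Vfin] at hσV
        rw [Fintype.mem_piFinset]
        intro i
        rw [Finset.mem_product]
        have h1 : (σ i).1 = κ i := congrFun hσκ i
        constructor
        · simpa [h1] using Finset.mem_singleton_self (κ i)
        · rw [Finset.mem_range, ← h1]
          exact (hσV.2.1 i).1
      have hcard2 : fib.card ≤ ∏ i, Mn d (κ i) := by
        calc fib.card ≤ _ := Finset.card_le_card hsub
        _ = ∏ i : Fin d, (({κ i} : Finset ℕ) ×ˢ Finset.range (Mn d (κ i))).card :=
            Fintype.card_piFinset _
        _ = ∏ i : Fin d, Mn d (κ i) := by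
            apply Finset.prod_congr rfl
            intro i _
            rw [Finset.card_product, Finset.card_singleton, Finset.card_range, one_mul]
      have hreal : ((∏ i, Mn d (κ i) : ℕ) : ℝ) ≤ (8*d)^d * (2/ε) := by
        push_cast
        have h1 : ∏ i, (Mn d (κ i) : ℝ) ≤ ∏ i, (8 * d * (lam d (κ i))⁻¹) :=
          Finset.prod_le_prod (fun i _ => Nat.cast_nonneg _)
            (fun i _ => Mn_real_bound hd hε0 (κ i))
        have h2 : ∏ i : Fin d, ((8:ℝ) * d * (lam d (κ i))⁻¹) =
            (8*d)^d * (∏ i, lam d (κ i))⁻¹ := by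
          rw [Finset.prod_mul_distrib, Finset.prod_const, Finset.card_univ,
            Fintype.card_fin, ← Finset.prod_inv_distrib]
        have h3 : (∏ i, lam d (κ i))⁻¹ ≤ 2/ε := by
          have hp : (0:ℝ) < ε/2 := by positivity
          have h4 : (∏ i, lam d (κ i))⁻¹ ≤ (ε/2)⁻¹ := by
            gcongr
          rw [inv_div] at h4
          simpa using h4
        calc ∏ i, (Mn d (κ i) : ℝ) ≤ ∏ i : Fin d, ((8:ℝ) * d * (lam d (κ i))⁻¹) := h1
        _ = (8*d)^d * (∏ i, lam d (κ i))⁻¹ := h2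
        _ ≤ (8*d)^d * (2/ε) := by
            apply mul_le_mul_of_nonneg_left h3 (by positivity)
      calc (fib.card : ℝ) ≤ ((∏ i, Mn d (κ i) : ℕ) : ℝ) := by exact_mod_cast hcard2
      _ ≤ (8*d)^d * (2/ε) := hreal
  calc ((Vfin d ε).card : ℝ) = ∑ κ ∈ t, (((Vfin d ε).filter (fun σ => (fun i => (σ i).1) = κ)).card : ℝ) := by
        rw [hcard]; push_cast; rfl
  _ ≤ ∑ κ ∈ t, (8*d:ℝ)^d * (2/ε) := Finset.sum_le_sum hfiber
  _ = (t.card : ℝ) * ((8*d)^d * (2/ε)) := by rw [Finset.sum_const, nsmul_eq_mul]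
  _ = ((K + 1 : ℕ) : ℝ)^d * (8*d)^d * (2/ε) := by
      rw [Fintype.card_piFinset]
      simp [Finset.card_range]
      ring

end Count
end S18

namespace S18
open MeasureTheory Set

def cube (d : ℕ) : Set (Fin d → ℝ) := Set.univ.pi fun _ => Set.Icc (0:ℝ) 1

lemma volume_cube (d : ℕ) : volume (cube d) = 1 := by
  unfold cube
  rw [volume_pi_pi]
  simp [Real.volume_Icc]

section Box
variable {d : ℕ} (hd : 2 ≤ d) {ε : ℝ} (hε0 : 0 < ε)
include hd

lemma BoxSet_subset_cube {σ : Fin d → ℕ × ℕ} (hσ : σ ∈ Vfin d ε) :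
    BoxSet d σ ⊆ cube d := by
  apply Set.pi_mono
  intro i _
  rw [mem_Vfin] at hσ
  have h1 : aA d (σ i).1 (σ i).2 ≤ 1 := (hσ.2.1 i).2
  exact perInterval_subset_Icc ⟨aA_nonneg hd _ _, h1⟩ (aB_mem hd h1)

lemma measurableSet_BoxSet (σ : Fin d → ℕ × ℕ) : MeasurableSet (BoxSet d σ) :=
  MeasurableSet.univ_pi fun i => measurableSet_perInterval _ _

lemma volume_BoxSet {σ : Fin d → ℕ × ℕ} (hσ : σ ∈ Vfin d ε) :
    ENNReal.ofReal (ε/2) ≤ volume (BoxSet d σ) := by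
  rw [mem_Vfin] at hσ
  unfold BoxSet
  rw [volume_pi_pi]
  have h1 : ∀ i, volume (ArcSet d (σ i).1 (σ i).2) = ENNReal.ofReal (lam d (σ i).1) := by
    intro i
    have ha1 : aA d (σ i).1 (σ i).2 ≤ 1 := (hσ.2.1 i).2
    unfold ArcSet
    rw [volume_perInterval ⟨aA_nonneg hd _ _, ha1⟩ (aB_mem hd ha1), len_arc hd]
  calc ENNReal.ofReal (ε/2) ≤ ENNReal.ofReal (∏ i, lam d (σ i).1) :=
        ENNReal.ofReal_le_ofReal hσ.2.2
  _ = ∏ i, ENNReal.ofReal (lam d (σ i).1) := by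
      rw [← ENNReal.ofReal_prod_of_nonneg]
      intro i _
      exact le_of_lt (lam_pos hd _)
  _ = ∏ i, volume (ArcSet d (σ i).1 (σ i).2) := by
      exact Finset.prod_congr rfl (fun i _ => (h1 i).symm)

end Box

/-- abstract union bound existence -/
lemma exists_hitting (d n : ℕ) (F : Finset (Set (Fin d → ℝ))) (ε' : ℝ)
    (hε'0 : 0 < ε') (hε'1 : ε' ≤ 1)
    (hmeas : ∀ B ∈ F, MeasurableSet B)
    (hsub : ∀ B ∈ F, B ⊆ cube d)
    (hvol : ∀ B ∈ F, ENNReal.ofReal ε' ≤ volume B)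
    (hcard : (F.card : ℝ) * (1 - ε') ^ n < 1) :
    ∃ x : Fin n → (Fin d → ℝ), (∀ j, x j ∈ cube d) ∧ ∀ B ∈ F, ∃ j, x j ∈ B := by
  classical
  set cubeN : Set (Fin n → Fin d → ℝ) := Set.univ.pi fun _ => cube d with hcubeN
  have hvolN : volume cubeN = 1 := by
    rw [hcubeN, volume_pi_pi]
    simp [volume_cube]
  set bad : Set (Fin d → ℝ) → Set (Fin n → Fin d → ℝ) :=
    fun B => Set.univ.pi fun _ => (cube d \ B) with hbad
  have hbadvol : ∀ B ∈ F, volume (bad B) ≤ ENNReal.ofReal ((1 - ε')^n) := by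
    intro B hB
    rw [hbad]
    simp only
    rw [volume_pi_pi]
    have h1 : volume (cube d \ B) = volume (cube d) - volume B :=
      measure_diff (hsub B hB) (hmeas B hB).nullMeasurableSet
        (ne_top_of_le_ne_top (by rw [volume_cube]; exact ENNReal.one_ne_top)
          (measure_mono (hsub B hB)))
    have h2 : volume (cube d \ B) ≤ ENNReal.ofReal (1 - ε') := by
      rw [h1, volume_cube]
      calc 1 - volume B ≤ 1 - ENNReal.ofReal ε' := tsub_le_tsub_left (hvol B hB) 1
      _ = ENNReal.ofReal 1 - ENNReal.ofReal ε' := by rw [ENNReal.ofReal_one]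
      _ = ENNReal.ofReal (1 - ε') := (ENNReal.ofReal_sub 1 (le_of_lt hε'0)).symm
    calc ∏ _j : Fin n, volume (cube d \ B) = volume (cube d \ B) ^ n := by
          rw [Finset.prod_const, Finset.card_univ, Fintype.card_fin]
    _ ≤ (ENNReal.ofReal (1 - ε'))^n := pow_le_pow_left' h2 n
    _ = ENNReal.ofReal ((1 - ε')^n) := (ENNReal.ofReal_pow (by linarith) n).symm
  by_contra hcon
  push_neg at hcon
  have hsubU : cubeN ⊆ ⋃ B ∈ F, bad B := by
    intro x hx
    have hxj : ∀ j, x j ∈ cube d := by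
      intro j
      exact hx j (Set.mem_univ j)
    obtain ⟨B, hBF, hB⟩ := hcon x hxj
    rw [Set.mem_iUnion₂]
    refine ⟨B, hBF, ?_⟩
    rw [hbad]
    intro j _
    exact ⟨hxj j, hB j⟩
  have hle : volume cubeN ≤ ∑ B ∈ F, volume (bad B) :=
    le_trans (measure_mono hsubU) (measure_biUnion_finset_le F bad)
  have hle2 : ∑ B ∈ F, volume (bad B) ≤ F.card • ENNReal.ofReal ((1 - ε')^n) :=
    Finset.sum_le_card_nsmul F _ _ hbadvol
  have hlt : (F.card : ENNReal) * ENNReal.ofReal ((1 - ε')^n) < 1 := by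
    calc (F.card : ENNReal) * ENNReal.ofReal ((1 - ε')^n)
        = ENNReal.ofReal ((F.card : ℝ) * (1 - ε')^n) := by
          rw [ENNReal.ofReal_mul (Nat.cast_nonneg _)]
          congr 1
          rw [ENNReal.ofReal_natCast]
    _ < 1 := by
          rw [← ENNReal.ofReal_one]
          exact ENNReal.ofReal_lt_ofReal_iff one_pos |>.2 hcard
  rw [hvolN] at hle
  rw [nsmul_eq_mul] at hle2
  exact absurd (le_trans hle hle2) (not_le.2 hlt)

end S18

namespace S18
open MeasureTheory Set

section Arith
variable {d : ℕ} (hd : 2 ≤ d) {ε : ℝ} (hε0 : 0 < ε) (hε2 : ε ≤ 1/2)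
include hd hε0 hε2

lemma log2d_ge : (1:ℝ) ≤ Real.log (2*d) := by
  have h4 : (4:ℝ) ≤ 2*d := by
    have : (2:ℝ) ≤ d := by exact_mod_cast hd
    linarith
  have := Real.log_two_gt_d9
  have h1 : Real.log 4 ≤ Real.log (2*d) := Real.log_le_log (by norm_num) h4
  have h2 : Real.log 4 = 2 * Real.log 2 := by
    rw [show (4:ℝ) = 2^2 by norm_num, Real.log_pow]
    push_cast; ring
  nlinarith

lemma logeps_ge : (1:ℝ) ≤ Real.log (Real.exp 1 / ε) := by
  have h1 : Real.log (Real.exp 1 / ε) = 1 - Real.log ε := by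
    rw [Real.log_div (Real.exp_ne_zero 1) (ne_of_gt hε0), Real.log_exp]
  have h2 : Real.log ε ≤ 0 := Real.log_nonpos (le_of_lt hε0) (by linarith)
  linarith

lemma log2eps_le : Real.log (2/ε) ≤ Real.log (Real.exp 1 / ε) := by
  apply Real.log_le_log (by positivity)
  have h2e : (2:ℝ) ≤ Real.exp 1 := by
    have := Real.add_one_le_exp 1
    linarith
  gcongr

lemma log2eps_pos : 0 < Real.log (2/ε) := by
  apply Real.log_pos
  rw [lt_div_iff₀ hε0]
  linarith

set_option maxHeartbeats 2000000 in
lemma key_arith :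
    ((Kn d ε + 1 : ℕ) : ℝ)^d * (8*d)^d * (2/ε) *
      (1 - ε/2) ^ (⌊24 * Real.exp 1 * (2*d*Real.log (2*d) + Real.log (Real.exp 1/ε)) / ε⌋₊) < 1 := by
  have hd2 : (2:ℝ) ≤ (d:ℝ) := by exact_mod_cast hd
  have hL2d := log2d_ge hd hε0 hε2
  have hQ := logeps_ge hd hε0 hε2
  have hl2e := log2eps_le hd hε0 hε2
  have hl2p := log2eps_pos hd hε0 hε2
  have he9 := Real.exp_one_gt_d9
  set e1 := Real.exp 1 with he1
  set X := 2*(d:ℝ)*Real.log (2*d) + Real.log (e1/ε) with hX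
  set RHS := 24 * e1 * X / ε with hRHS
  have hn1 : RHS < (⌊RHS⌋₊:ℝ) + 1 := Nat.lt_floor_add_one RHS
  obtain ⟨n, hng⟩ : ∃ n, ⌊RHS⌋₊ = n := ⟨_, rfl⟩
  rw [hng] at hn1 ⊢
  set Lc := Real.log (2/ε) + 1 with hLc
  have hLc1 : (1:ℝ) < Lc := by simp only [hLc]; linarith
  have hLc2Q : Lc ≤ 2 * Real.log (e1/ε) := by simp only [hLc]; linarith
  -- bound the combinatorial factor
  have hKb : ((Kn d ε + 1 : ℕ) : ℝ) ≤ 4*d*Lc := by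
    have h1 : ((Kn d ε : ℕ) : ℝ) ≤ (4*d:ℝ) * Real.log (2/ε) :=
      Nat.floor_le (by positivity)
    push_cast
    have h4d1 : (1:ℝ) ≤ 4*(d:ℝ) := by linarith
    simp only [hLc]
    nlinarith
  have hbase : ((Kn d ε + 1 : ℕ) : ℝ)^d * (8*d)^d ≤ (32*d^2*Lc)^d := by
    rw [← mul_pow]
    apply pow_le_pow_left₀ (by positivity)
    calc ((Kn d ε + 1 : ℕ) : ℝ) * (8*d) ≤ (4*d*Lc) * (8*d) := by
          apply mul_le_mul_of_nonneg_right hKb (by positivity)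
    _ = 32*d^2*Lc := by ring
  -- exponential bound
  have hexp : (1 - ε/2)^n ≤ Real.exp (-(n*(ε/2))) := by
    have h1 : 1 - ε/2 ≤ Real.exp (-(ε/2)) := by
      have := Real.add_one_le_exp (-(ε/2))
      linarith
    calc (1 - ε/2)^n ≤ (Real.exp (-(ε/2)))^n :=
          pow_le_pow_left₀ (by linarith) h1 n
    _ = Real.exp (↑n * -(ε/2)) := (Real.exp_nat_mul _ n).symm
    _ = Real.exp (-(↑n*(ε/2))) := by ring_nf
  -- core inequality : log A < n ε/2
  have hA : (0:ℝ) < (32*d^2*Lc)^d * (2/ε) := by positivity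
  have hcore : Real.log ((32*d^2*Lc)^d * (2/ε)) < (n:ℝ) * (ε/2) := by
    have hlogA : Real.log ((32*d^2*Lc)^d * (2/ε)) =
        d * Real.log (32*d^2*Lc) + Real.log (2/ε) := by
      rw [Real.log_mul (by positivity) (by positivity), Real.log_pow]
    rw [hlogA]
    have hRHSe : RHS * (ε/2) = 12 * e1 * X := by
      rw [hRHS]; field_simp; ring
    have hdP0 : (0:ℝ) ≤ (d:ℝ) * Real.log (2*d) := by nlinarith
    have hmain : d * Real.log (32*d^2*Lc) + Real.log (2/ε) + ε/2 ≤ 12 * e1 * X := by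
      have hdec : Real.log (32*(d:ℝ)^2*Lc) = Real.log 32 + 2*Real.log d + Real.log Lc := by
        rw [Real.log_mul (by positivity) (by positivity),
          Real.log_mul (by positivity) (by positivity), Real.log_pow]
        push_cast; ring
      have h32 : Real.log 32 ≤ 3 * Real.log (2*d) := by
        have h1 : Real.log 32 = 5 * Real.log 2 := by
          rw [show (32:ℝ) = 2^5 by norm_num, Real.log_pow]; push_cast; ring
        have h2 : Real.log 4 ≤ Real.log (2*d) := by
          apply Real.log_le_log (by norm_num); nlinarith
        have h2' : Real.log 4 = 2 * Real.log 2 := by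
          rw [show (4:ℝ) = 2^2 by norm_num, Real.log_pow]; push_cast; ring
        have h3 : (0:ℝ) < Real.log 2 := Real.log_pos (by norm_num)
        linarith
      have hdd : Real.log d ≤ Real.log (2*d) := by
        apply Real.log_le_log (by linarith); linarith
      have hdlogLc : (d:ℝ) * Real.log Lc ≤
          2*((d:ℝ)*Real.log (2*d)) + 2*Real.log (e1/ε) := by
        by_cases hcase : Lc ≤ (2*(d:ℝ))^2
        · have h1 : Real.log Lc ≤ 2 * Real.log (2*d) := by
            have ha := Real.log_le_log (by linarith : (0:ℝ) < Lc) hcase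
            have hb : Real.log ((2*(d:ℝ))^2) = 2 * Real.log (2*d) := by
              rw [Real.log_pow]; push_cast; ring
            linarith [hb ▸ ha]
          have h2 : (d:ℝ) * Real.log Lc ≤ (d:ℝ) * (2*Real.log (2*d)) :=
            mul_le_mul_of_nonneg_left h1 (by linarith)
          linarith [h2]
        · push_neg at hcase
          have hsq : 2*(d:ℝ) ≤ Real.sqrt Lc := by
            have h1 : Real.sqrt ((2*(d:ℝ))^2) ≤ Real.sqrt Lc :=
              Real.sqrt_le_sqrt (le_of_lt hcase)
            rwa [Real.sqrt_sq (by linarith)] at h1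
          have hsp : (0:ℝ) < Real.sqrt Lc := by
            apply Real.sqrt_pos.2; linarith
          have h2 : Real.log Lc ≤ 2 * Real.sqrt Lc := by
            have h3 : Real.log (Real.sqrt Lc) ≤ Real.sqrt Lc - 1 :=
              Real.log_le_sub_one_of_pos hsp
            have h4 : Real.log (Real.sqrt Lc) = Real.log Lc / 2 :=
              Real.log_sqrt (by linarith)
            linarith
          have h5 : (d:ℝ) * Real.log Lc ≤ (d:ℝ) * (2*Real.sqrt Lc) :=
            mul_le_mul_of_nonneg_left h2 (by linarith)
          have h7 : (2*(d:ℝ)) * Real.sqrt Lc ≤ Real.sqrt Lc * Real.sqrt Lc :=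
            mul_le_mul_of_nonneg_right hsq (le_of_lt hsp)
          have h8 : Real.sqrt Lc * Real.sqrt Lc = Lc := Real.mul_self_sqrt (by linarith)
          have h9 : (d:ℝ) * Real.log Lc ≤ Lc := by nlinarith [h5, h7, h8]
          calc (d:ℝ) * Real.log Lc ≤ Lc := h9
          _ ≤ 2*Real.log (e1/ε) := hLc2Q
          _ ≤ 2*((d:ℝ)*Real.log (2*d)) + 2*Real.log (e1/ε) := by linarith [hdP0]
      have he32 : (32:ℝ) ≤ 12 * e1 := by linarith
      have hA1 : (d:ℝ) * Real.log 32 ≤ 3*((d:ℝ)*Real.log (2*d)) :=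
        by nlinarith [mul_le_mul_of_nonneg_left h32 (by linarith : (0:ℝ) ≤ (d:ℝ))]
      have hA2 : (d:ℝ) * Real.log d ≤ (d:ℝ)*Real.log (2*d) :=
        mul_le_mul_of_nonneg_left hdd (by linarith)
      have hA4 : 32 * (2*((d:ℝ)*Real.log (2*d)) + Real.log (e1/ε)) ≤
          12 * e1 * (2*((d:ℝ)*Real.log (2*d)) + Real.log (e1/ε)) :=
        mul_le_mul_of_nonneg_right he32 (by linarith)
      rw [hdec, hX]
      nlinarith [hA1, hA2, hA4, hdlogLc, hl2e, hQ, hε2, hdP0]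
    have hnlow : RHS - 1 < (n:ℝ) := by linarith
    have hε2pos : (0:ℝ) < ε/2 := by linarith
    calc d * Real.log (32*d^2*Lc) + Real.log (2/ε) ≤ 12*e1*X - ε/2 := by linarith
    _ = RHS * (ε/2) - ε/2 := by rw [hRHSe]
    _ = (RHS - 1) * (ε/2) := by ring
    _ < (n:ℝ) * (ε/2) := by
        apply mul_lt_mul_of_pos_right hnlow hε2pos
  -- combine
  have hABlt : (32*d^2*Lc)^d * (2/ε) < Real.exp ((n:ℝ) * (ε/2)) :=
    (Real.log_lt_iff_lt_exp hA).1 hcore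
  have hfinal : ((Kn d ε + 1 : ℕ) : ℝ)^d * (8*d)^d * (2/ε) * (1 - ε/2)^n
      ≤ (32*d^2*Lc)^d * (2/ε) * Real.exp (-(n*(ε/2))) := by
    apply mul_le_mul
    · apply mul_le_mul_of_nonneg_right hbase (by positivity)
    · exact hexp
    · apply pow_nonneg (by linarith)
    · positivity
  have hlast : (32*d^2*Lc)^d * (2/ε) * Real.exp (-(n*(ε/2))) < 1 := by
    rw [Real.exp_neg]
    rw [mul_inv_lt_iff₀ (Real.exp_pos _), one_mul]
    exact hABlt
  linarith

end Arith
end S18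


namespace S18
open MeasureTheory Set

section Glue
variable {d : ℕ} (hd : 2 ≤ d)
include hd

lemma perVol_le_one {a b : Fin d → ℝ}
    (hab : ∀ i, a i ∈ Set.Icc (0:ℝ) 1 ∧ b i ∈ Set.Icc (0:ℝ) 1) :
    perVol d a b ≤ 1 := by
  rw [perVol_eq]
  exact Finset.prod_le_one (fun i _ => (len_mem (hab i).1 (hab i).2).1)
    (fun i _ => (len_mem (hab i).1 (hab i).2).2)

lemma perDisp_nonneg (P : Finset (Fin d → ℝ)) : 0 ≤ perDisp d P := by
  have hne : (0:ℝ) ∈ {v : ℝ | ∃ a b : Fin d → ℝ,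
      (∀ i, a i ∈ Set.Icc (0:ℝ) 1 ∧ b i ∈ Set.Icc (0:ℝ) 1) ∧
      v = perVol d a b ∧
      ∀ x ∈ P, x ∉ Set.univ.pi fun i => perInterval (a i) (b i)} := by
    refine ⟨(fun _ => 1), (fun _ => 0), fun i => ⟨by norm_num, by norm_num⟩, ?_, ?_⟩
    · unfold perVol
      have : ∀ i : Fin d, (if (1:ℝ) < 0 then (0:ℝ) - 1 else 1 - (1 - 0)) = 0 := by
        intro i; norm_num
      rw [Finset.prod_congr rfl (fun i _ => this i), Finset.prod_const]
      have hd0 : d ≠ 0 := by omega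
      simp [zero_pow hd0]
    · intro x _ hx
      have h0 : x ⟨0, by omega⟩ ∈ perInterval 1 0 := hx ⟨0, by omega⟩ (Set.mem_univ _)
      unfold perInterval at h0
      rw [if_neg (by norm_num)] at h0
      exact h0.2 ⟨h0.1.1, h0.1.2⟩
  apply le_csSup _ hne
  refine ⟨1, ?_⟩
  rintro v ⟨a, b, hab, rfl, -⟩
  exact perVol_le_one hd hab

lemma cube_infinite : (cube d).Infinite := by
  have hinj : Function.Injective (fun m : ℕ => (fun _ : Fin d => 1/((m:ℝ)+1)) : ℕ → Fin d → ℝ) := by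
    intro m m' h
    have h0 : (1:ℝ)/((m:ℝ)+1) = 1/((m':ℝ)+1) := congrFun h ⟨0, by omega⟩
    have hm : (0:ℝ) < (m:ℝ)+1 := by positivity
    have hm' : (0:ℝ) < (m':ℝ)+1 := by positivity
    field_simp at h0
    have : m' = m := by
      have h1 : m' + 1 = m + 1 := by exact_mod_cast h0
      omega
    omega
  apply Set.infinite_of_injective_forall_mem hinj
  intro m
  intro i _
  constructor
  · positivity
  · rw [div_le_one (by positivity)]
    have : (0:ℝ) ≤ (m:ℝ) := Nat.cast_nonneg m
    linarith

end Glue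
end S18


open S18 in
theorem stmt_18 (d : ℕ) (hd : 2 ≤ d) (ε : ℝ) (hε : ε ∈ Set.Ioc (0:ℝ) (1/2)) :
    (perNinv ε d : ℝ) ≤
      24 * Real.exp 1 * (2 * d * Real.log (2 * d) + Real.log (Real.exp 1 / ε)) / ε := by
  classical
  obtain ⟨hε0, hε2⟩ := hε
  set RHS := 24 * Real.exp 1 * (2 * d * Real.log (2 * d) + Real.log (Real.exp 1 / ε)) / ε
    with hRHS
  have hQ := logeps_ge hd hε0 hε2
  have hL2d := log2d_ge hd hε0 hε2
  have hd2 : (2:ℝ) ≤ (d:ℝ) := by exact_mod_cast hd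
  have he1 : (1:ℝ) ≤ Real.exp 1 := by
    have := Real.add_one_le_exp 1; linarith
  have hX1 : (1:ℝ) ≤ 2 * d * Real.log (2 * d) + Real.log (Real.exp 1 / ε) := by nlinarith
  have hRHS1 : (1:ℝ) ≤ RHS := by
    rw [hRHS, le_div_iff₀ hε0]
    nlinarith
  set n := ⌊RHS⌋₊ with hn
  have hn1 : 1 ≤ n := Nat.le_floor (by simpa using hRHS1)
  have hnR : (n:ℝ) ≤ RHS := Nat.floor_le (by linarith)
  -- the family of boxes
  set F := (Vfin d ε).image (BoxSet d) with hF
  have harith := key_arith hd hε0 hε2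
  have hcardV := card_Vfin hd hε0 (d := d) (ε := ε)
  have hcard : (F.card : ℝ) * (1 - ε/2)^n < 1 := by
    have h1 : (F.card : ℝ) ≤ ((Vfin d ε).card : ℝ) := by
      exact_mod_cast Finset.card_image_le
    have h2 : (0:ℝ) ≤ (1 - ε/2)^n := by
      apply pow_nonneg; linarith
    calc (F.card : ℝ) * (1 - ε/2)^n
        ≤ (((Kn d ε + 1 : ℕ) : ℝ)^d * (8*d)^d * (2/ε)) * (1 - ε/2)^n := by
          apply mul_le_mul_of_nonneg_right (le_trans h1 hcardV) h2
    _ < 1 := harith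
  obtain ⟨x, hxc, hxhit⟩ := exists_hitting d n F (ε/2) (by linarith) (by linarith)
    (by rintro B hB
        rw [hF, Finset.mem_image] at hB
        obtain ⟨σ, -, rfl⟩ := hB
        exact measurableSet_BoxSet hd σ)
    (by rintro B hB
        rw [hF, Finset.mem_image] at hB
        obtain ⟨σ, hσ, rfl⟩ := hB
        exact BoxSet_subset_cube hd hσ)
    (by rintro B hB
        rw [hF, Finset.mem_image] at hB
        obtain ⟨σ, hσ, rfl⟩ := hB
        exact volume_BoxSet hd hσ)
    hcard
  -- the point set
  set P0 : Finset (Fin d → ℝ) := Finset.image x Finset.univ with hP0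
  have hP0cube : ↑P0 ⊆ cube d := by
    intro p hp
    rw [hP0] at hp
    simp only [Finset.coe_image, Set.mem_image] at hp
    obtain ⟨j, -, rfl⟩ := hp
    exact hxc j
  have hP0card : (↑P0 : Set (Fin d → ℝ)).ncard ≤ n := by
    rw [Set.ncard_coe_finset]
    calc P0.card ≤ Finset.univ.card := Finset.card_image_le
    _ = n := by simp
  obtain ⟨Ps, hPs0, hPscube, hPscard⟩ :=
    (cube_infinite hd).exists_superset_ncard_eq hP0cube (P0.finite_toSet) hP0card
  have hPsfin : Ps.Finite := by
    by_contra hinf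
    rw [Set.Infinite.ncard hinf] at hPscard
    omega
  set P : Finset (Fin d → ℝ) := hPsfin.toFinset with hP
  have hPcoe : (P : Set (Fin d → ℝ)) = Ps := hPsfin.coe_toFinset
  have hPcard : P.card = n := by
    rw [← Set.ncard_coe_finset, hPcoe]; exact hPscard
  -- dispersion bound
  have hdisp : perDisp d P ≤ ε := by
    apply Real.sSup_le _ (le_of_lt hε0)
    rintro v ⟨a, b, hab, rfl, havoid⟩
    by_contra hlt
    push_neg at hlt
    obtain ⟨σ, hσV, hσsub⟩ := net hd hε0 a b hab hlt
    have hBF : BoxSet d σ ∈ F := by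
      rw [hF]; exact Finset.mem_image_of_mem _ hσV
    obtain ⟨j, hj⟩ := hxhit _ hBF
    have hxP : x j ∈ P := by
      have h1 : x j ∈ P0 := by
        rw [hP0]; exact Finset.mem_image_of_mem x (Finset.mem_univ j)
      have h2 : (x j) ∈ Ps := hPs0 h1
      rw [← hPcoe] at h2
      exact_mod_cast h2
    exact havoid (x j) hxP (hσsub hj)
  -- perDispStar bound
  have hstar : perDispStar d n ≤ ε := by
    have h1 : perDispStar d n ≤ perDisp d P := by
      apply csInf_le
      · refine ⟨0, ?_⟩
        rintro v ⟨P', -, -, rfl⟩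
        exact perDisp_nonneg hd P'
      · exact ⟨P, by rw [hPcoe]; exact hPscube, hPcard, rfl⟩
    exact le_trans h1 hdisp
  have hNinv : perNinv ε d ≤ n := Nat.sInf_le hstar
  calc (perNinv ε d : ℝ) ≤ (n : ℝ) := by exact_mod_cast hNinv
  _ ≤ RHS := hnR
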